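/- Let 2 ≤ j < k and n ≥ k+j+1, and let A = R^{j,k} be the normalized Radon matrix. Let T = {τ : τ ⊆ {1,…,k+j+1}, |τ| = k} be the set of all k-element subsets of {1,…,k+j+1}. Then the columns of A indexed by T are linearly dependent; that is, there exists a nonzero vector h, supported on T (a set of cardinality C(k+j+1,k)), with A h = 0. In particular the number of nonzero rows of A_T is C(k+j+1,j), which is strictly smaller than C(k+j+1,k). -/

import Mathlib

open scoped Classical
open Finset Matrix

noncomputable section

/-- The normalized Radon matrix `R^{j,k}`: rows are indexed by `j`-element subsets of
`{1,…,n}`, columns by `k`-element subsets, with entry `1/√(C(k,j))` if the row set is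
contained in the column set and `0` otherwise. -/
def radon (n j k : ℕ) :
    Matrix {σ : Finset (Fin n) // σ.card = j} {τ : Finset (Fin n) // τ.card = k} ℝ :=
  fun σ τ => if σ.1 ⊆ τ.1 then 1 / Real.sqrt (k.choose j) else 0

/-- The submatrix of `A` consisting of the columns indexed by `T`. -/
def colSub {m p R : Type*} (A : Matrix m p R) (T : Finset p) :
    Matrix m {x // x ∈ T} R :=
  fun i t => A i t.1

/-- Maximum absolute row sum of a matrix, `‖M‖_∞`. -/
def matInfNorm {m p : Type*} [Fintype p] (M : Matrix m p ℝ) : ℝ :=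
  ⨆ i, ∑ j, |M i j|

/-- Maximum absolute column sum of a matrix, `‖M‖₁`. -/
def matOneNorm {m p : Type*} [Fintype m] (M : Matrix m p ℝ) : ℝ :=
  ⨆ j, ∑ i, |M i j|

/-- `ℓ¹` norm of a vector. -/
def vecOneNorm {m : Type*} [Fintype m] (u : m → ℝ) : ℝ := ∑ i, |u i|

/-- `ℓ^∞` norm of a vector. -/
def vecInfNorm {m : Type*} (u : m → ℝ) : ℝ := ⨆ i, |u i|

lemma card_subsets (n m : ℕ) (S : Finset (Fin n)) :
    (Finset.univ.filter (fun τ : {τ : Finset (Fin n) // τ.card = m} => τ.1 ⊆ S)).card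
      = S.card.choose m := by
  rw [← Finset.card_powersetCard]
  apply Finset.card_bij (fun τ _ => τ.1)
  · intro τ hτ
    simp only [Finset.mem_filter, Finset.mem_univ, true_and] at hτ
    simp [Finset.mem_powersetCard, hτ, τ.2]
  · intro a _ b _ hab
    exact Subtype.ext hab
  · intro t ht
    rw [Finset.mem_powersetCard] at ht
    exact ⟨⟨t, ht.2⟩, by simp [ht.1], rfl⟩


/-- the columns of the Radon matrix indexed by all `k`-subsets of
`{1,…,k+j+1}` are linearly dependent; the set `T` of those columns has cardinality
`C(k+j+1,k)`, and the number of nonzero rows of `A_T` is `C(k+j+1,j) < C(k+j+1,k)`. -/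
theorem stmt1 (n j k : ℕ) (hj : 2 ≤ j) (hjk : j < k) (hn : k + j + 1 ≤ n) :
    let T : Finset {τ : Finset (Fin n) // τ.card = k} :=
      Finset.univ.filter (fun τ => ∀ i ∈ τ.1, (i : ℕ) < k + j + 1)
    T.card = (k + j + 1).choose k ∧
    (Finset.univ.filter (fun σ : {σ : Finset (Fin n) // σ.card = j} =>
        ∃ τ ∈ T, radon n j k σ τ ≠ 0)).card = (k + j + 1).choose j ∧
    (k + j + 1).choose j < (k + j + 1).choose k ∧
    ∃ h : {τ : Finset (Fin n) // τ.card = k} → ℝ, h ≠ 0 ∧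
      (∀ τ, h τ ≠ 0 → τ ∈ T) ∧ (radon n j k).mulVec h = 0 := by
  intro T
  set N := k + j + 1 with hN
  set S : Finset (Fin n) := Finset.univ.filter (fun i : Fin n => (i : ℕ) < N) with hSdef
  have hS : S.card = N := by
    have : S = Finset.univ.map (Fin.castLEEmb hn) := by
      ext i
      simp only [hSdef, Finset.mem_filter, Finset.mem_univ, true_and, Finset.mem_map,
        Fin.castLEEmb, Function.Embedding.coeFn_mk]
      constructor
      · intro hi
        exact ⟨⟨(i : ℕ), hi⟩, Fin.ext rfl⟩
      · rintro ⟨a, rfl⟩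
        exact a.2
    rw [this, Finset.card_map, Finset.card_univ, Fintype.card_fin]
  have hsubS : ∀ (s : Finset (Fin n)), s ⊆ S ↔ ∀ i ∈ s, (i : ℕ) < N := by
    intro s
    constructor
    · intro hs i hi
      have := hs hi
      simpa [hSdef] using this
    · intro hs i hi
      simp only [hSdef, Finset.mem_filter, Finset.mem_univ, true_and]
      exact hs i hi
  have hT : T = Finset.univ.filter (fun τ : {τ : Finset (Fin n) // τ.card = k} => τ.1 ⊆ S) := by
    ext τ
    simp [T, hsubS]
    simp [hN]
  have hradon_ne : (0:ℝ) < 1 / Real.sqrt (k.choose j) := by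
    have : 0 < (k.choose j : ℝ) := by
      exact_mod_cast Nat.choose_pos (le_of_lt hjk)
    positivity
  -- Part 1
  have part1 : T.card = N.choose k := by
    rw [hT, card_subsets, hS]
  -- Part 2 : characterize the nonzero rows
  have hrow : ∀ σ : {σ : Finset (Fin n) // σ.card = j},
      (∃ τ ∈ T, radon n j k σ τ ≠ 0) ↔ σ.1 ⊆ S := by
    intro σ
    constructor
    · rintro ⟨τ, hτT, hne⟩
      rw [hT, Finset.mem_filter] at hτT
      have hsub : σ.1 ⊆ τ.1 := by
        by_contra hc
        simp [radon, hc] at hne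
      exact hsub.trans hτT.2
    · intro hσS
      have hjk' : σ.1.card ≤ k := by rw [σ.2]; omega
      have hkS : k ≤ S.card := by rw [hS]; omega
      obtain ⟨u, hσu, huS, hu⟩ := Finset.exists_subsuperset_card_eq hσS hjk' hkS
      refine ⟨⟨u, hu⟩, ?_, ?_⟩
      · rw [hT, Finset.mem_filter]
        exact ⟨Finset.mem_univ _, huS⟩
      · simp only [radon, hσu, if_true]
        exact ne_of_gt hradon_ne
  have part2 : (Finset.univ.filter (fun σ : {σ : Finset (Fin n) // σ.card = j} =>
      ∃ τ ∈ T, radon n j k σ τ ≠ 0)).card = N.choose j := by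
    have : (Finset.univ.filter (fun σ : {σ : Finset (Fin n) // σ.card = j} =>
        ∃ τ ∈ T, radon n j k σ τ ≠ 0))
        = Finset.univ.filter (fun σ : {σ : Finset (Fin n) // σ.card = j} => σ.1 ⊆ S) :=
      Finset.filter_congr (fun σ _ => by simpa using hrow σ)
    rw [this, card_subsets, hS]
  -- Part 3
  have part3 : N.choose j < N.choose k := by
    have hsymm : N.choose k = N.choose (j + 1) := by
      rw [← Nat.choose_symm (by omega : k ≤ N)]
      congr 1
      omega
    rw [hsymm]
    have h1 : N.choose (j + 1) * (j + 1) = N.choose j * (N - j) := Nat.choose_succ_right_eq N j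
    have h2 : N - j = k + 1 := by omega
    have hpos : 0 < N.choose j := Nat.choose_pos (by omega)
    have : N.choose j * (j + 1) < N.choose (j + 1) * (j + 1) := by
      rw [h1, h2]
      exact mul_lt_mul_of_pos_left (by omega : j + 1 < k + 1) hpos
    exact Nat.lt_of_mul_lt_mul_right this
  refine ⟨part1, part2, part3, ?_⟩
  -- Part 4
  set R' : Finset {σ : Finset (Fin n) // σ.card = j} :=
    Finset.univ.filter (fun σ => ∃ τ ∈ T, radon n j k σ τ ≠ 0) with hR'
  set v : {x // x ∈ T} → ({x // x ∈ R'} → ℝ) :=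
    fun t s => radon n j k s.1 t.1 with hv
  have hnotli : ¬ LinearIndependent ℝ v := by
    intro hli
    have hle := hli.fintype_card_le_finrank
    rw [Module.finrank_pi] at hle
    rw [Fintype.card_coe, Fintype.card_coe, part1, part2] at hle
    omega
  rw [Fintype.not_linearIndependent_iff] at hnotli
  obtain ⟨g, hg0, i, hgi⟩ := hnotli
  refine ⟨fun τ => if hτ : τ ∈ T then g ⟨τ, hτ⟩ else 0, ?_, ?_, ?_⟩
  · intro hzero
    apply hgi
    have := congrFun hzero i.1
    simpa [i.2] using this
  · intro τ hτ
    by_contra hc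
    simp [hc] at hτ
  · funext σ
    simp only [Matrix.mulVec, Pi.zero_apply]
    rw [show (radon n j k σ ⬝ᵥ fun τ => if hτ : τ ∈ T then g ⟨τ, hτ⟩ else 0)
      = ∑ τ : {τ : Finset (Fin n) // τ.card = k},
          radon n j k σ τ * (if hτ : τ ∈ T then g ⟨τ, hτ⟩ else 0) from rfl]
    rw [← Finset.sum_subset T.subset_univ
      (fun τ _ hτ => by rw [dif_neg hτ, mul_zero])]
    rw [← Finset.sum_attach T (fun τ => radon n j k σ τ * (if hτ : τ ∈ T then g ⟨τ, hτ⟩ else 0))]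
    have heq : ∀ t : {x // x ∈ T},
        radon n j k σ t.1 * (if hτ : t.1 ∈ T then g ⟨t.1, hτ⟩ else 0)
          = g t * radon n j k σ t.1 := by
      intro t
      rw [dif_pos t.2, mul_comm]
    rw [Finset.sum_congr rfl (fun t _ => heq t)]
    by_cases hσ : σ ∈ R'
    · have := congrFun hg0 ⟨σ, hσ⟩
      simp only [Finset.sum_apply, Pi.smul_apply, smul_eq_mul, Pi.zero_apply, hv] at this
      exact this
    · have hz : ∀ τ ∈ T, radon n j k σ τ = 0 := by
        intro τ hτ
        by_contra hc
        exact hσ (by simp only [hR', Finset.mem_filter, Finset.mem_univ, true_and]; exact ⟨τ, hτ, hc⟩)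
      apply Finset.sum_eq_zero
      intro t _
      rw [hz t.1 t.2, mul_zero]
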